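/- Fix a buyer i in a linear Fisher market. Let p be the (unique) CEEI price vector of the market consisting of all buyers except i (with their budgets), and let p' be the CEEI price vector of the full market including buyer i with budget B_i. Then for every item j, p_j ≤ p'_j ≤ p_j + B_i / s_j; that is, a single buyer can affect the price of any item j by at most B_i / s_j. -/

import Mathlib

/-- Extended-real-valued logarithm: `elog t = log t` for `t > 0` and `⊥` (i.e. `-∞`)
for `t ≤ 0`. -/
noncomputable def elog (t : ℝ) : EReal :=
  if t ≤ 0 then ⊥ else ((Real.log t : ℝ) : EReal)

/-- An allocation is feasible if it is nonnegative and allocates at most the supply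
`s j` of each item `j`. -/
def Feasible {ι : Type*} [Fintype ι] {m : ℕ} (s : Fin m → ℝ)
    (x : ι → Fin m → ℝ) : Prop :=
  (∀ i j, 0 ≤ x i j) ∧ ∀ j, ∑ i, x i j ≤ s j

/-- The Eisenberg–Gale objective `∑ i, B i * log (v i · x i)` (valued in `EReal`). -/
noncomputable def EGobj {ι : Type*} [Fintype ι] {m : ℕ} (v : ι → Fin m → ℝ)
    (B : ι → ℝ) (x : ι → Fin m → ℝ) : EReal :=
  ∑ i, (B i : EReal) * elog (∑ j, v i j * x i j)

/-- `x` is a maximizer of the Eisenberg–Gale program (a CEEI allocation). -/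
def EGMax {ι : Type*} [Fintype ι] {m : ℕ} (s : Fin m → ℝ) (v : ι → Fin m → ℝ)
    (B : ι → ℝ) (x : ι → Fin m → ℝ) : Prop :=
  Feasible s x ∧ ∀ y, Feasible s y → EGobj v B y ≤ EGobj v B x

open Finset Topology Filter

lemma elog_of_pos {t : ℝ} (h : 0 < t) : elog t = ((Real.log t : ℝ) : EReal) :=
  if_neg (not_le.2 h)

lemma EGobj_coe {ι : Type*} [Fintype ι] {m : ℕ} (v : ι → Fin m → ℝ) (B : ι → ℝ)
    (x : ι → Fin m → ℝ) (hu : ∀ k, 0 < ∑ j, v k j * x k j) :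
    EGobj v B x = ((∑ k, B k * Real.log (∑ j, v k j * x k j) : ℝ) : EReal) := by
  have hcs : ∀ (f : ι → ℝ), ((∑ k, f k : ℝ) : EReal) = ∑ k, ((f k : ℝ) : EReal) := fun f =>
    map_sum (⟨⟨Real.toEReal, EReal.coe_zero⟩, fun a b => EReal.coe_add a b⟩ : ℝ →+ EReal)
      f Finset.univ
  rw [EGobj, hcs]
  exact Finset.sum_congr rfl fun k _ => by rw [elog_of_pos (hu k), ← EReal.coe_mul]

lemma util_pos {ι : Type*} [Fintype ι] [Nonempty ι] {m : ℕ} (hm : 0 < m)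
    {v : ι → Fin m → ℝ} {B : ι → ℝ} {s : Fin m → ℝ}
    (hv : ∀ i j, 0 < v i j) (hB : ∀ i, 0 < B i) (hs : ∀ j, 0 < s j)
    {x : ι → Fin m → ℝ} (hx : EGMax s v B x) :
    ∀ k, 0 < ∑ j, v k j * x k j := by
  classical
  by_contra hcon
  push_neg at hcon
  obtain ⟨k₀, hk₀⟩ := hcon
  set c : ℝ := (Fintype.card ι : ℝ)
  have hc : 0 < c := by
    simp only [c, Nat.cast_pos]; exact Fintype.card_pos
  set y : ι → Fin m → ℝ := fun _ j => s j / c with hy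
  have hyfeas : Feasible s y := by
    constructor
    · intro k j; exact div_nonneg (hs j).le hc.le
    · intro j
      simp only [hy, Finset.sum_const, Finset.card_univ, nsmul_eq_mul]
      rw [mul_div_cancel₀ _ hc.ne']
  have hyu : ∀ k, 0 < ∑ j, v k j * y k j := by
    intro k
    apply Finset.sum_pos
    · intro j _; exact mul_pos (hv k j) (div_pos (hs j) hc)
    · exact Finset.univ_nonempty_iff.2 (Fin.pos_iff_nonempty.1 hm)
  have hle := hx.2 y hyfeas
  rw [EGobj_coe v B y hyu] at hle
  have hbot : EGobj v B x = ⊥ := by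
    rw [EGobj, ← Finset.add_sum_erase _ _ (Finset.mem_univ k₀)]
    have : elog (∑ j, v k₀ j * x k₀ j) = ⊥ := if_pos hk₀
    rw [this, EReal.mul_bot_of_pos (by exact_mod_cast hB k₀), EReal.bot_add]
  rw [hbot] at hle
  exact absurd hle (EReal.bot_lt_coe _).not_ge

lemma market_clears {ι : Type*} [Fintype ι] [Nonempty ι] {m : ℕ}
    {v : ι → Fin m → ℝ} {B : ι → ℝ} {s : Fin m → ℝ}
    (hv : ∀ i j, 0 < v i j) (hB : ∀ i, 0 < B i)
    {x : ι → Fin m → ℝ} (hfeas : Feasible s x)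
    (hu : ∀ k, 0 < ∑ j, v k j * x k j)
    (hopt : ∀ y, Feasible s y → EGobj v B y ≤ EGobj v B x) :
    ∀ j, ∑ k, x k j = s j := by
  classical
  intro j₀
  rcases eq_or_lt_of_le (hfeas.2 j₀) with h | h
  · exact h
  exfalso
  set δ : ℝ := s j₀ - ∑ k, x k j₀ with hδdef
  have hδ : 0 < δ := sub_pos.2 h
  obtain ⟨k₀⟩ := ‹Nonempty ι›
  set y : ι → Fin m → ℝ := fun k j => x k j + if k = k₀ ∧ j = j₀ then δ else 0 with hy
  have hsum : ∀ j, ∑ k, y k j = (∑ k, x k j) + if j = j₀ then δ else 0 := by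
    intro j
    rw [hy]
    simp only [Finset.sum_add_distrib]
    congr 1
    rcases eq_or_ne j j₀ with rfl | hj
    · simp
    · simp [hj]
  have hyfeas : Feasible s y := by
    constructor
    · intro k j
      have := hfeas.1 k j
      rw [hy]; dsimp only
      split <;> [linarith; linarith]
    · intro j
      rw [hsum j]
      rcases eq_or_ne j j₀ with rfl | hj
      · simp [hδdef]
      · simpa [hj] using hfeas.2 j
  have hyu : ∀ k, ∑ j, v k j * y k j
      = (∑ j, v k j * x k j) + if k = k₀ then v k j₀ * δ else 0 := by
    intro k
    rw [hy]
    simp only [mul_add, Finset.sum_add_distrib]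
    congr 1
    rcases eq_or_ne k k₀ with rfl | hk
    · simp
    · simp [hk]
  have hyu_pos : ∀ k, 0 < ∑ j, v k j * y k j := by
    intro k
    rw [hyu k]
    have := hu k
    split <;> [nlinarith [mul_pos (hv k j₀) hδ]; linarith]
  have hlt : EGobj v B x < EGobj v B y := by
    rw [EGobj_coe v B x hu, EGobj_coe v B y hyu_pos, EReal.coe_lt_coe_iff]
    apply Finset.sum_lt_sum
    · intro k _
      rw [hyu k]
      have hk := hu k
      have : (∑ j, v k j * x k j) ≤ (∑ j, v k j * x k j) + if k = k₀ then v k j₀ * δ else 0 := by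
        split <;> [nlinarith [mul_pos (hv k j₀) hδ]; linarith]
      exact mul_le_mul_of_nonneg_left (Real.log_le_log hk this) (hB k).le
    · refine ⟨k₀, Finset.mem_univ _, ?_⟩
      rw [hyu k₀]
      simp only [if_pos rfl]
      have h1 : (∑ j, v k₀ j * x k₀ j) < (∑ j, v k₀ j * x k₀ j) + v k₀ j₀ * δ := by
        nlinarith [mul_pos (hv k₀ j₀) hδ]
      exact mul_lt_mul_of_pos_left (Real.log_lt_log (hu k₀) h1) (hB k₀)
  exact absurd (hopt y hyfeas) hlt.not_ge

lemma comp_slack {ι : Type*} [Fintype ι] {m : ℕ}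
    {v : ι → Fin m → ℝ} {B : ι → ℝ} {s : Fin m → ℝ}
    (hv : ∀ i j, 0 < v i j)
    {x : ι → Fin m → ℝ} (hfeas : Feasible s x)
    (hu : ∀ k, 0 < ∑ j', v k j' * x k j')
    (hopt : ∀ y, Feasible s y → EGobj v B y ≤ EGobj v B x)
    {k l : ι} {j : Fin m} (hxkj : 0 < x k j) :
    B l / (∑ j', v l j' * x l j') * v l j ≤ B k / (∑ j', v k j' * x k j') * v k j := by
  classical
  by_contra hcon
  push_neg at hcon
  have hkl : k ≠ l := by rintro rfl; exact lt_irrefl _ hcon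
  set uk : ℝ := ∑ j', v k j' * x k j' with huk
  set ul : ℝ := ∑ j', v l j' * x l j' with hul
  have hukpos : 0 < uk := hu k
  have hulpos : 0 < ul := hu l
  set a : ℝ := v k j with ha
  set b : ℝ := v l j with hb
  have hapos : 0 < a := hv k j
  have hbpos : 0 < b := hv l j
  set f : ℝ → ℝ := fun ε => B k * Real.log (uk - ε * a) + B l * Real.log (ul + ε * b)
    with hf
  have hg1 : HasDerivAt (fun ε : ℝ => uk - ε * a) (-a) 0 := by
    simpa using (HasDerivAt.const_sub uk ((hasDerivAt_id (0:ℝ)).mul_const a))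
  have hg2 : HasDerivAt (fun ε : ℝ => ul + ε * b) b 0 := by
    simpa using (HasDerivAt.const_add ul ((hasDerivAt_id (0:ℝ)).mul_const b))
  have hlog1 : HasDerivAt (fun ε : ℝ => Real.log (uk - ε * a)) (uk⁻¹ * (-a)) 0 := by
    have := (Real.hasDerivAt_log (by simpa using hukpos.ne')).comp 0 hg1
    simpa [Function.comp_def] using this
  have hlog2 : HasDerivAt (fun ε : ℝ => Real.log (ul + ε * b)) (ul⁻¹ * b) 0 := by
    have := (Real.hasDerivAt_log (by simpa using hulpos.ne')).comp 0 hg2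
    simpa [Function.comp_def] using this
  have hder : HasDerivAt f (B k * (uk⁻¹ * (-a)) + B l * (ul⁻¹ * b)) 0 :=
    (hlog1.const_mul (B k)).add (hlog2.const_mul (B l))
  have hDpos : 0 < B k * (uk⁻¹ * (-a)) + B l * (ul⁻¹ * b) := by
    have h1 : B k / uk * a < B l / ul * b := hcon
    have e1 : B k * (uk⁻¹ * (-a)) = -(B k / uk * a) := by field_simp
    have e2 : B l * (ul⁻¹ * b) = B l / ul * b := by field_simp
    rw [e1, e2]; linarith
  rw [hasDerivAt_iff_tendsto_slope] at hder
  have hslope : ∀ᶠ ε in 𝓝[≠] (0:ℝ), 0 < slope f 0 ε :=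
    hder.eventually (eventually_gt_nhds hDpos)
  have hmono : 𝓝[>] (0:ℝ) ≤ 𝓝[≠] (0:ℝ) :=
    nhdsWithin_mono 0 (fun x hx => ne_of_gt hx)
  have hsmall : ∀ᶠ ε in 𝓝[>] (0:ℝ), ε ∈ Set.Ioo 0 (x k j) :=
    Ioo_mem_nhdsGT hxkj
  obtain ⟨ε, hslopeε, hεmem⟩ := ((hslope.filter_mono hmono).and hsmall).exists
  obtain ⟨hε0, hεlt⟩ := hεmem
  have hfgain : f 0 < f ε := by
    have : 0 < (f ε - f 0) / (ε - 0) := by rw [← slope_def_field]; exact hslopeε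
    have h2 : 0 < f ε - f 0 := by
      rcases div_pos_iff.1 this with ⟨h, _⟩ | ⟨_, h⟩
      · exact h
      · linarith
    linarith
  set y : ι → Fin m → ℝ := fun k' j' =>
    x k' j' + (if k' = k ∧ j' = j then -ε else 0) + (if k' = l ∧ j' = j then ε else 0)
    with hy
  have huky : 0 < uk - ε * a := by
    have h1 : a * x k j ≤ uk := by
      rw [huk]
      refine Finset.single_le_sum (fun j' _ => mul_nonneg (hv k j').le (hfeas.1 k j'))
        (mem_univ j) |>.trans_eq' (by ring)
    nlinarith
  have hyfeas : Feasible s y := by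
    constructor
    · intro k' j'
      have hx0 := hfeas.1 k' j'
      rw [hy]; dsimp only
      split_ifs with h1 h2 h2
      · exact absurd (h1.1.symm.trans h2.1) hkl
      · have : x k' j' = x k j := by rw [h1.1, h1.2]
        linarith
      · linarith
      · linarith
    · intro j'
      have : ∑ k', y k' j' = ∑ k', x k' j' := by
        rw [hy]
        simp only [Finset.sum_add_distrib]
        rcases eq_or_ne j' j with rfl | hj
        · simp [hkl]
        · simp [hj]
      rw [this]; exact hfeas.2 j'
  have hyu : ∀ k', ∑ j', v k' j' * y k' j'
      = (∑ j', v k' j' * x k' j') + ((if k' = k then -(ε * a) else 0)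
        + if k' = l then ε * b else 0) := by
    intro k'
    rw [hy]
    simp only [mul_add, Finset.sum_add_distrib]
    rcases eq_or_ne k' k with rfl | hk
    · rcases eq_or_ne k' l with rfl | hl
      · exact absurd rfl hkl
      · simp [hl, ha, mul_comm]
    · rcases eq_or_ne k' l with rfl | hl
      · simp [hk, hb, mul_comm]
      · simp [hk, hl]
  have hyu_pos : ∀ k', 0 < ∑ j', v k' j' * y k' j' := by
    intro k'
    rw [hyu k']
    rcases eq_or_ne k' k with rfl | hk
    · rw [if_pos rfl, if_neg hkl, ← huk]
      linarith
    · rcases eq_or_ne k' l with rfl | hl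
      · rw [if_neg hk, if_pos rfl, ← hul]
        nlinarith [mul_pos hε0 hbpos]
      · rw [if_neg hk, if_neg hl]
        have := hu k'; linarith
  have hlt : EGobj v B x < EGobj v B y := by
    rw [EGobj_coe v B x hu, EGobj_coe v B y hyu_pos, EReal.coe_lt_coe_iff]
    have hdiff : (∑ k', B k' * Real.log (∑ j', v k' j' * y k' j'))
        - (∑ k', B k' * Real.log (∑ j', v k' j' * x k' j')) = f ε - f 0 := by
      rw [← Finset.sum_sub_distrib]
      set h : ι → ℝ := fun k' => B k' * Real.log (∑ j', v k' j' * y k' j')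
        - B k' * Real.log (∑ j', v k' j' * x k' j') with hh
      have hl_mem : l ∈ (univ : Finset ι).erase k :=
        Finset.mem_erase.2 ⟨(Ne.symm hkl), mem_univ l⟩
      rw [← Finset.add_sum_erase _ h (mem_univ k), ← Finset.add_sum_erase _ h hl_mem]
      have hrest : ∑ k' ∈ ((univ : Finset ι).erase k).erase l, h k' = 0 := by
        apply Finset.sum_eq_zero
        intro k' hk'
        have hk'l := Finset.ne_of_mem_erase hk'
        have hk'k := Finset.ne_of_mem_erase (Finset.mem_of_mem_erase hk')
        rw [hh]
        dsimp only
        rw [hyu k', if_neg hk'k, if_neg hk'l]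
        ring_nf
      rw [hrest, add_zero, hh]
      dsimp only
      rw [hyu k, hyu l, if_pos rfl, if_neg hkl, if_neg (Ne.symm hkl), if_pos rfl, hf]
      dsimp only
      rw [← huk, ← hul]
      ring_nf
    apply lt_of_sub_pos
    rw [hdiff]
    linarith
  exact absurd (hopt y hyfeas) hlt.not_ge

/-- **A single buyer has a small effect on CEEI prices.**  Fix a buyer `i` in a
linear Fisher market.  Let `p` be the (unique) CEEI price vector of the market
consisting of all buyers except `i` (with their budgets), and let `p'` be the CEEI
price vector of the full market including buyer `i` with budget `B i`.  Then for
every item `j`, `p j ≤ p' j ≤ p j + B i / s j`; that is, a single buyer can affect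
the price of any item `j` by at most `B i / s j`. -/
theorem single_buyer_small_price_effect {n m : ℕ} (hm : 0 < m)
    (v : Fin n → Fin m → ℝ) (B : Fin n → ℝ) (s : Fin m → ℝ)
    (hv : ∀ i j, 0 < v i j) (hB : ∀ i, 0 < B i) (hs : ∀ j, 0 < s j)
    (i : Fin n)
    (x : {k : Fin n // k ≠ i} → Fin m → ℝ)
    (hx : EGMax s (fun k => v k.1) (fun k => B k.1) x)
    (x' : Fin n → Fin m → ℝ) (hx' : EGMax s v B x')
    (p p' : Fin m → ℝ)
    (hp : ∀ j, IsGreatest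
      (Set.range fun k : {k : Fin n // k ≠ i} =>
        (B k.1 / (∑ j', v k.1 j' * x k j')) * v k.1 j) (p j))
    (hp' : ∀ j, IsGreatest
      (Set.range fun k : Fin n =>
        (B k / (∑ j', v k j' * x' k j')) * v k j) (p' j)) :
    ∀ j, p j ≤ p' j ∧ p' j ≤ p j + B i / s j := by
  classical
  haveI : Nonempty (Fin n) := ⟨i⟩
  obtain ⟨kw, -⟩ := (hp ⟨0, hm⟩).1
  haveI : Nonempty {k : Fin n // k ≠ i} := ⟨kw⟩
  -- small-market facts
  have hu : ∀ k : {k : Fin n // k ≠ i}, 0 < ∑ j', v k.1 j' * x k j' :=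
    util_pos hm (fun (k : {k : Fin n // k ≠ i}) j => hv k.1 j) (fun (k : {k : Fin n // k ≠ i}) => hB k.1) hs hx
  have hclear : ∀ j, ∑ k : {k : Fin n // k ≠ i}, x k j = s j :=
    market_clears (fun (k : {k : Fin n // k ≠ i}) j => hv k.1 j) (fun (k : {k : Fin n // k ≠ i}) => hB k.1) hx.1 hu hx.2
  have hub : ∀ j (k : {k : Fin n // k ≠ i}),
      B k.1 / (∑ j', v k.1 j' * x k j') * v k.1 j ≤ p j :=
    fun j k => (hp j).2 ⟨k, rfl⟩
  have hCS : ∀ (k : {k : Fin n // k ≠ i}) j, 0 < x k j →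
      B k.1 / (∑ j', v k.1 j' * x k j') * v k.1 j = p j := by
    intro k j hkj
    refine le_antisymm (hub j k) ?_
    obtain ⟨k₀, hk₀⟩ := (hp j).1
    rw [← hk₀]
    exact comp_slack (fun (k : {k : Fin n // k ≠ i}) j => hv k.1 j) hx.1 hu hx.2 hkj
  have hppos : ∀ j, 0 < p j := by
    intro j
    obtain ⟨k₀, hk₀⟩ := (hp j).1
    rw [← hk₀]
    exact mul_pos (div_pos (hB k₀.1) (hu k₀)) (hv k₀.1 j)
  have hbud : ∀ k : {k : Fin n // k ≠ i}, ∑ j, p j * x k j = B k.1 := by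
    intro k
    have h1 : ∑ j, p j * x k j
        = ∑ j, (B k.1 / (∑ j', v k.1 j' * x k j') * v k.1 j) * x k j := by
      refine Finset.sum_congr rfl fun j _ => ?_
      rcases eq_or_lt_of_le (hx.1.1 k j) with h0 | h0
      · rw [← h0, mul_zero, mul_zero]
      · rw [hCS k j h0]
    rw [h1]
    have h2 : ∑ j, (B k.1 / (∑ j', v k.1 j' * x k j') * v k.1 j) * x k j
        = B k.1 / (∑ j', v k.1 j' * x k j') * ∑ j, v k.1 j * x k j := by
      rw [Finset.mul_sum]
      exact Finset.sum_congr rfl fun j _ => by ring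
    rw [h2, div_mul_cancel₀ _ (hu k).ne']
  have htot : ∑ j, p j * s j = ∑ k : {k : Fin n // k ≠ i}, B k.1 := by
    have : ∑ j, p j * s j = ∑ j, ∑ k : {k : Fin n // k ≠ i}, p j * x k j := by
      refine Finset.sum_congr rfl fun j _ => ?_
      rw [← hclear j, Finset.mul_sum]
    rw [this, Finset.sum_comm]
    exact Finset.sum_congr rfl fun k _ => hbud k
  -- full-market facts
  have hu' : ∀ k, 0 < ∑ j', v k j' * x' k j' := util_pos hm hv hB hs hx'
  have hclear' : ∀ j, ∑ k, x' k j = s j := market_clears hv hB hx'.1 hu' hx'.2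
  have hub' : ∀ j k, B k / (∑ j', v k j' * x' k j') * v k j ≤ p' j :=
    fun j k => (hp' j).2 ⟨k, rfl⟩
  have hCS' : ∀ k j, 0 < x' k j →
      B k / (∑ j', v k j' * x' k j') * v k j = p' j := by
    intro k j hkj
    refine le_antisymm (hub' j k) ?_
    obtain ⟨k₀, hk₀⟩ := (hp' j).1
    rw [← hk₀]
    exact comp_slack hv hx'.1 hu' hx'.2 hkj
  have hbud' : ∀ k, ∑ j, p' j * x' k j = B k := by
    intro k
    have h1 : ∑ j, p' j * x' k j
        = ∑ j, (B k / (∑ j', v k j' * x' k j') * v k j) * x' k j := by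
      refine Finset.sum_congr rfl fun j _ => ?_
      rcases eq_or_lt_of_le (hx'.1.1 k j) with h0 | h0
      · rw [← h0, mul_zero, mul_zero]
      · rw [hCS' k j h0]
    rw [h1]
    have h2 : ∑ j, (B k / (∑ j', v k j' * x' k j') * v k j) * x' k j
        = B k / (∑ j', v k j' * x' k j') * ∑ j, v k j * x' k j := by
      rw [Finset.mul_sum]
      exact Finset.sum_congr rfl fun j _ => by ring
    rw [h2, div_mul_cancel₀ _ (hu' k).ne']
  have htot' : ∑ j, p' j * s j = ∑ k, B k := by
    have : ∑ j, p' j * s j = ∑ j, ∑ k, p' j * x' k j := by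
      refine Finset.sum_congr rfl fun j _ => ?_
      rw [← hclear' j, Finset.mul_sum]
    rw [this, Finset.sum_comm]
    exact Finset.sum_congr rfl fun k _ => hbud' k
  -- monotonicity of prices
  have hmono : ∀ j, p j ≤ p' j := by
    by_contra hc
    push_neg at hc
    obtain ⟨j₀, hj₀⟩ := hc
    set T : Finset {k : Fin n // k ≠ i} := univ.filter
      (fun k => B k.1 / (∑ j', v k.1 j' * x' k.1 j') < B k.1 / (∑ j', v k.1 j' * x k j'))
      with hT
    set S : Finset (Fin m) := univ.filter (fun j => p' j < p j) with hS
    have stepB : ∀ j ∈ S, ∀ k : {k : Fin n // k ≠ i}, 0 < x k j → k ∈ T := by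
      intro j hj k hkj
      have h1 := hCS k j hkj
      have h2 := hub' j k.1
      have h3 : p' j < p j := (Finset.mem_filter.1 hj).2
      refine Finset.mem_filter.2 ⟨mem_univ _, ?_⟩
      have h4 : B k.1 / (∑ j', v k.1 j' * x' k.1 j') * v k.1 j
          < B k.1 / (∑ j', v k.1 j' * x k j') * v k.1 j := by
        rw [h1]; exact lt_of_le_of_lt h2 h3
      exact lt_of_mul_lt_mul_right h4 (hv k.1 j).le
    have stepA : ∀ k ∈ T, ∀ j, 0 < x' k.1 j → j ∈ S := by
      intro k hk j hkj
      have h1 := hCS' k.1 j hkj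
      have h2 := hub j k
      have h3 : B k.1 / (∑ j', v k.1 j' * x' k.1 j') < B k.1 / (∑ j', v k.1 j' * x k j') :=
        (Finset.mem_filter.1 hk).2
      refine Finset.mem_filter.2 ⟨mem_univ _, ?_⟩
      calc p' j = B k.1 / (∑ j', v k.1 j' * x' k.1 j') * v k.1 j := h1.symm
        _ < B k.1 / (∑ j', v k.1 j' * x k j') * v k.1 j :=
            mul_lt_mul_of_pos_right h3 (hv k.1 j)
        _ ≤ p j := h2
    have stepC : ∀ k ∈ T, B k.1 < ∑ j, p j * x' k.1 j := by
      intro k hk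
      have h3 : B k.1 / (∑ j', v k.1 j' * x' k.1 j') < B k.1 / (∑ j', v k.1 j' * x k j') :=
        (Finset.mem_filter.1 hk).2
      have hult : (∑ j', v k.1 j' * x k j') < ∑ j', v k.1 j' * x' k.1 j' := by
        have := (div_lt_div_iff₀ (hu' k.1) (hu k)).1 h3
        exact lt_of_mul_lt_mul_left this (hB k.1).le
      have h1 : ∑ j, (B k.1 / (∑ j', v k.1 j' * x k j') * v k.1 j) * x' k.1 j
          ≤ ∑ j, p j * x' k.1 j := by
        refine Finset.sum_le_sum fun j _ => ?_
        exact mul_le_mul_of_nonneg_right (hub j k) (hx'.1.1 k.1 j)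
      have h2 : ∑ j, (B k.1 / (∑ j', v k.1 j' * x k j') * v k.1 j) * x' k.1 j
          = B k.1 / (∑ j', v k.1 j' * x k j') * ∑ j, v k.1 j * x' k.1 j := by
        rw [Finset.mul_sum]
        exact Finset.sum_congr rfl fun j _ => by ring
      have h4 : B k.1 < B k.1 / (∑ j', v k.1 j' * x k j') * ∑ j, v k.1 j * x' k.1 j := by
        have hβ : 0 < B k.1 / (∑ j', v k.1 j' * x k j') := div_pos (hB k.1) (hu k)
        calc B k.1 = B k.1 / (∑ j', v k.1 j' * x k j') * (∑ j', v k.1 j' * x k j') :=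
              (div_mul_cancel₀ _ (hu k).ne').symm
          _ < _ := mul_lt_mul_of_pos_left hult hβ
      calc B k.1 < _ := h4
        _ = _ := h2.symm
        _ ≤ _ := h1
    have hj₀S : j₀ ∈ S := Finset.mem_filter.2 ⟨mem_univ _, hj₀⟩
    have hTne : T.Nonempty := by
      have hpos : 0 < ∑ k : {k : Fin n // k ≠ i}, x k j₀ := by rw [hclear j₀]; exact hs j₀
      have : ∃ k : {k : Fin n // k ≠ i}, 0 < x k j₀ := by
        by_contra hno
        push_neg at hno
        have : ∑ k : {k : Fin n // k ≠ i}, x k j₀ ≤ 0 :=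
          Finset.sum_nonpos fun k _ => hno k
        linarith
      obtain ⟨k, hk⟩ := this
      exact ⟨k, stepB j₀ hj₀S k hk⟩
    have h5 : ∀ j, ∑ k ∈ T, x' k.1 j ≤ s j := by
      intro j
      have e : ∑ k ∈ T, x' k.1 j
          = ∑ kk ∈ T.map (Function.Embedding.subtype _), x' kk j := by
        rw [Finset.sum_map]
        rfl
      rw [e]
      exact le_trans
        (Finset.sum_le_sum_of_subset_of_nonneg (Finset.subset_univ _)
          (fun kk _ _ => hx'.1.1 kk j))
        (hx'.1.2 j)
    have hchain : ∑ j ∈ S, p j * s j < ∑ j ∈ S, p j * s j := by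
      calc ∑ j ∈ S, p j * s j
          = ∑ j ∈ S, ∑ k : {k : Fin n // k ≠ i}, p j * x k j := by
            refine Finset.sum_congr rfl fun j hj => ?_
            rw [← hclear j, Finset.mul_sum]
        _ = ∑ j ∈ S, ∑ k ∈ T, p j * x k j := by
            refine Finset.sum_congr rfl fun j hj => ?_
            refine (Finset.sum_subset (Finset.subset_univ T) fun k _ hk => ?_).symm
            rcases eq_or_lt_of_le (hx.1.1 k j) with h0 | h0
            · rw [← h0, mul_zero]
            · exact absurd (stepB j hj k h0) hk
        _ = ∑ k ∈ T, ∑ j ∈ S, p j * x k j := Finset.sum_comm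
        _ ≤ ∑ k ∈ T, B k.1 := by
            refine Finset.sum_le_sum fun k _ => ?_
            rw [← hbud k]
            exact Finset.sum_le_sum_of_subset_of_nonneg (Finset.subset_univ S)
              (fun j _ _ => mul_nonneg (hppos j).le (hx.1.1 k j))
        _ < ∑ k ∈ T, ∑ j, p j * x' k.1 j :=
            Finset.sum_lt_sum_of_nonempty hTne stepC
        _ = ∑ k ∈ T, ∑ j ∈ S, p j * x' k.1 j := by
            refine Finset.sum_congr rfl fun k hk => ?_
            refine (Finset.sum_subset (Finset.subset_univ S) fun j _ hj => ?_).symm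
            rcases eq_or_lt_of_le (hx'.1.1 k.1 j) with h0 | h0
            · rw [← h0, mul_zero]
            · exact absurd (stepA k hk j h0) hj
        _ = ∑ j ∈ S, ∑ k ∈ T, p j * x' k.1 j := Finset.sum_comm
        _ ≤ ∑ j ∈ S, p j * s j := by
            refine Finset.sum_le_sum fun j _ => ?_
            rw [← Finset.mul_sum]
            exact mul_le_mul_of_nonneg_left (h5 j) (hppos j).le
    exact lt_irrefl _ hchain
  -- upper bound
  have hsplit : ∑ k, B k = B i + ∑ k : {k : Fin n // k ≠ i}, B k.1 := by
    rw [Fintype.sum_eq_add_sum_compl i B]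
    congr 1
    exact Finset.sum_subtype _ (fun k => by simp) B
  intro j
  refine ⟨hmono j, ?_⟩
  have h1 : ∀ l, 0 ≤ (p' l - p l) * s l :=
    fun l => mul_nonneg (sub_nonneg.2 (hmono l)) (hs l).le
  have h2 : (p' j - p j) * s j ≤ ∑ l, (p' l - p l) * s l :=
    Finset.single_le_sum (fun l _ => h1 l) (mem_univ j)
  have h3 : ∑ l, (p' l - p l) * s l = B i := by
    have e : ∑ l, (p' l - p l) * s l = (∑ l, p' l * s l) - ∑ l, p l * s l := by
      rw [← Finset.sum_sub_distrib]
      exact Finset.sum_congr rfl fun l _ => by ring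
    rw [e, htot', htot, hsplit]
    ring
  have h4 : (p' j - p j) * s j ≤ B i := h2.trans_eq h3
  have h5 : p' j - p j ≤ B i / s j := (le_div_iff₀ (hs j)).2 h4
  linarith
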